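/- Let K be a field of prime characteristic p, let f ∈ K[x] be a polynomial such that q(x) := f(x^p) is irreducible over K, let L be a field extension of K, and let g ∈ L[x] be a polynomial with g(x)^p equal to the image of q(x) in L[x]. Let I be a finite index set, e_i positive integers, and X ∈ Mat_n(K) such that K^n as a K[x]-module via X is isomorphic to ⊕_{i∈I} K[x]/(q^{e_i}). Then L^n, as an L[x]-module with x acting as the entrywise image of X in Mat_n(L), is isomorphic to ⊕_{i∈I} L[x]/(g^{p·e_i}). -/

import Mathlib

set_option maxHeartbeats 1000000

open scoped DirectSum
open Polynomial

/-- Let `K` have prime characteristic `p`, let `q(x) = f(x^p)` be irreducible over `K`,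
let `L/K` be a field extension, and let `g ∈ L[x]` satisfy `g^p = q` (image in `L[x]`).
If `K^n` as a `K[x]`-module via `X` is `⨁ i, K[x]/(q ^ e i)`, then `L^n` as an
`L[x]`-module via the image of `X` is `⨁ i, L[x]/(g ^ (p * e i))`. -/
theorem baseChange_type_of_inseparable_pth_root
    (K L : Type*) [Field K] [Field L] [Algebra K L]
    (p : ℕ) (hp : p.Prime) [CharP K p]
    (n : ℕ) (X : Matrix (Fin n) (Fin n) K)
    (f : Polynomial K)
    (hq : Irreducible (f.comp (Polynomial.X ^ p)))
    (g : Polynomial L)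
    (hg : g ^ p = (f.comp (Polynomial.X ^ p)).map (algebraMap K L))
    (I : Type*) [Fintype I] [DecidableEq I] (e : I → ℕ) (hpos : ∀ i, 0 < e i)
    (hX : Nonempty ((Module.AEval' X.mulVecLin) ≃ₗ[Polynomial K]
      (⨁ i : I, Polynomial K ⧸ Ideal.span {(f.comp (Polynomial.X ^ p)) ^ e i}))) :
    Nonempty ((Module.AEval' (X.map (algebraMap K L)).mulVecLin) ≃ₗ[Polynomial L]
      (⨁ i : I, Polynomial L ⧸ Ideal.span {g ^ (p * e i)})) := by
  classical
  obtain ⟨eK⟩ := hX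
  set σ : K →+* L := algebraMap K L with hσ
  set q : Polynomial K := f.comp (Polynomial.X ^ p) with hqdef
  have hq0 : q ≠ 0 := hq.ne_zero
  have hqL : q.map σ = g ^ p := hg.symm
  have hg0 : g ≠ 0 := by
    intro h
    apply hq0
    have : q.map σ = 0 := by rw [hqL, h]; simp [hp.ne_zero, zero_pow]
    exact (Polynomial.map_eq_zero_iff σ.injective).mp this
  -- abbreviations
  set MK := Module.AEval' X.mulVecLin with hMK
  set NL := Module.AEval' ((X.map σ).mulVecLin) with hNL
  let ofK := Module.AEval.of K (Fin n → K) X.mulVecLin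
  let ofL := Module.AEval.of L (Fin n → L) (X.map σ).mulVecLin
  -- the semilinear transfer map
  let ψ : MK → NL := fun m => ofL (fun j => σ (ofK.symm m j))
  have hψadd : ∀ m m' : MK, ψ (m + m') = ψ m + ψ m' := by
    intro m m'
    show ofL _ = ofL _ + ofL _
    rw [← map_add]
    congr 1
    funext j
    show σ ((ofK.symm (m + m')) j) = _
    rw [map_add]
    exact map_add σ _ _
  have hψ0 : ψ 0 = 0 := by
    show ofL _ = 0
    rw [← map_zero ofL]
    congr 1
    funext j
    rw [map_zero]
    exact map_zero σ
  have hψX : ∀ m : MK, ψ ((Polynomial.X : Polynomial K) • m) = (Polynomial.X : Polynomial L) • ψ m := by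
    intro m
    show ofL _ = (Polynomial.X : Polynomial L) • ofL _
    rw [Module.AEval.X_smul_of]
    congr 1
    funext j
    show σ ((ofK.symm ((Polynomial.X : Polynomial K) • m)) j) = _
    rw [Module.AEval.of_symm_X_smul]
    rw [Module.End.smul_def, Module.End.smul_def, Matrix.mulVecLin_apply, Matrix.mulVecLin_apply]
    exact RingHom.map_mulVec σ X (ofK.symm m) j
  have hψC : ∀ (a : K) (m : MK), ψ ((Polynomial.C a) • m) = (Polynomial.C (σ a)) • ψ m := by
    intro a m
    rw [Module.AEval.C_smul]
    show ofL _ = Polynomial.C (σ a) • ofL _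
    rw [Module.AEval.C_smul, ← map_smul]
    congr 1
    funext j
    show σ ((ofK.symm (a • m)) j) = _
    rw [map_smul]
    show σ (a • (ofK.symm m) j) = σ a • σ ((ofK.symm m) j)
    rw [smul_eq_mul, smul_eq_mul, map_mul]
  have hψ : ∀ (P : Polynomial K) (m : MK), ψ (P • m) = (P.map σ) • ψ m := by
    intro P
    induction P using Polynomial.induction_on with
    | C a => intro m; simpa using hψC a m
    | add P Q hP hQ => intro m; simp only [add_smul, Polynomial.map_add, hψadd, hP, hQ]
    | monomial k a ih =>
        intro m
        have h1 : (Polynomial.C a * Polynomial.X ^ (k + 1)) • m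
            = (Polynomial.C a * Polynomial.X ^ k) • ((Polynomial.X : Polynomial K) • m) := by
          rw [← mul_smul]; ring_nf
        rw [h1, ih, hψX, ← mul_smul]
        congr 1
        rw [Polynomial.map_mul, Polynomial.map_mul, Polynomial.map_pow, Polynomial.map_pow,
          Polynomial.map_X, Polynomial.map_C, pow_succ, mul_assoc]
  -- generators of MK
  let QK : I → Type _ := fun i => Polynomial K ⧸ Ideal.span {q ^ e i}
  let vK : I → MK := fun i => eK.symm (DirectSum.lof (Polynomial K) I QK i 1)
  let w : I → NL := fun i => ψ (vK i)
  have hsmul_one : ∀ i (P : Polynomial K),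
      P • (1 : QK i) = Ideal.Quotient.mk (Ideal.span {q ^ e i}) P := by
    intro i P
    show P • (Submodule.Quotient.mk (1 : Polynomial K) : QK i) = Submodule.Quotient.mk P
    rw [← Submodule.Quotient.mk_smul, smul_eq_mul, mul_one]
  have hann : ∀ i, (g ^ (p * e i)) • w i = 0 := by
    intro i
    have h1 : g ^ (p * e i) = (q ^ e i).map σ := by
      rw [pow_mul, ← hqL, ← Polynomial.map_pow]
    rw [h1, ← hψ]
    have h2 : (q ^ e i : Polynomial K) • vK i = 0 := by
      show (q ^ e i : Polynomial K) • eK.symm _ = 0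
      rw [← map_smul, ← map_smul, hsmul_one, Ideal.Quotient.eq_zero_iff_mem.mpr
        (Ideal.mem_span_singleton_self (q ^ e i))]
      simp
    rw [h2, hψ0]
  have hann' : ∀ i, Ideal.span {g ^ (p * e i)} ≤
      LinearMap.ker (LinearMap.toSpanSingleton (Polynomial L) NL (w i)) := by
    intro i x hx
    rw [Ideal.mem_span_singleton] at hx
    obtain ⟨c, rfl⟩ := hx
    rw [LinearMap.mem_ker, LinearMap.toSpanSingleton_apply, mul_comm, mul_smul, hann i, smul_zero]
  let Φ : (⨁ i : I, Polynomial L ⧸ Ideal.span {g ^ (p * e i)}) →ₗ[Polynomial L] NL :=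
    DirectSum.toModule (Polynomial L) I NL fun i =>
      Submodule.liftQ (Ideal.span {g ^ (p * e i)})
        (LinearMap.toSpanSingleton (Polynomial L) NL (w i)) (hann' i)
  have hΦ : ∀ i (P : Polynomial L),
      Φ (DirectSum.lof (Polynomial L) I _ i (Ideal.Quotient.mk _ P)) = P • w i := by
    intro i P
    show (DirectSum.toModule _ _ _ _) _ = _
    rw [DirectSum.toModule_lof]
    rfl
  -- surjectivity
  have hwmem : ∀ i, w i ∈ LinearMap.range Φ := by
    intro i
    exact ⟨DirectSum.lof (Polynomial L) I _ i (Ideal.Quotient.mk _ 1), by rw [hΦ, one_smul]⟩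
  have hgen : (Submodule.span (Polynomial K) (Set.range vK) : Submodule (Polynomial K) MK) = ⊤ := by
    have htop : Submodule.span (Polynomial K)
        (Set.range (fun i => DirectSum.lof (Polynomial K) I QK i 1)) = ⊤ := by
      rw [Submodule.eq_top_iff']
      intro x
      induction x using DirectSum.induction_on with
      | zero => exact Submodule.zero_mem _
      | of i y =>
        obtain ⟨P, rfl⟩ := Ideal.Quotient.mk_surjective y
        have h3 : (DirectSum.of QK i (Ideal.Quotient.mk _ P) : ⨁ i, QK i)
            = P • DirectSum.lof (Polynomial K) I QK i 1 := by
          rw [← map_smul, hsmul_one]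
          rfl
        rw [h3]
        exact Submodule.smul_mem _ _ (Submodule.subset_span ⟨i, rfl⟩)
      | add x y hx hy => exact Submodule.add_mem _ hx hy
    have h4 : Set.range vK
        = (eK.symm : (⨁ i, QK i) →ₗ[Polynomial K] MK) '' Set.range (fun i => DirectSum.lof (Polynomial K) I QK i 1) := by
      rw [← Set.range_comp]
      rfl
    rw [h4, ← Submodule.map_span, htop, Submodule.map_top, LinearMap.range_eq_top]
    exact eK.symm.surjective
  have hψmem : ∀ m : MK, ψ m ∈ LinearMap.range Φ := by
    intro m
    have hm : m ∈ Submodule.span (Polynomial K) (Set.range vK) := hgen ▸ Submodule.mem_top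
    induction hm using Submodule.span_induction with
    | mem x hx => obtain ⟨i, rfl⟩ := hx; exact hwmem i
    | zero => rw [hψ0]; exact Submodule.zero_mem _
    | add x y hx hy ihx ihy => rw [hψadd]; exact Submodule.add_mem _ ihx ihy
    | smul P x hx ih => rw [hψ]; exact Submodule.smul_mem _ _ ih
  have hsurj : Function.Surjective Φ := by
    intro u
    suffices h : u ∈ LinearMap.range Φ by exact h
    have hu : u = ofL (ofL.symm u) := (ofL.apply_symm_apply u).symm
    rw [hu, ← Finset.univ_sum_single (ofL.symm u), map_sum]
    refine Submodule.sum_mem _ fun j _ => ?_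
    have h5 : (Pi.single j ((ofL.symm u) j) : Fin n → L) = (ofL.symm u) j • (Pi.single j (1 : L) : Fin n → L) := by
      rw [← Pi.single_smul, smul_eq_mul, mul_one]
    rw [h5, map_smul]
    refine Submodule.smul_of_tower_mem _ _ ?_
    have h6 : ofL (Pi.single j (1 : L)) = ψ (ofK (Pi.single j (1 : K))) := by
      show ofL _ = ofL _
      congr 1
      funext j'
      show (Pi.single j (1 : L) : Fin n → L) j' = σ ((ofK.symm (ofK ((Pi.single j (1 : K) : Fin n → K)))) j')
      rw [ofK.symm_apply_apply]
      by_cases h : j' = j <;> simp [Pi.single_apply, h]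
    rw [h6]
    exact hψmem _
  -- dimension count
  have hq_ne : ∀ i, (q ^ e i : Polynomial K) ≠ 0 := fun i => pow_ne_zero _ hq0
  have hgpe_ne : ∀ i, (g ^ (p * e i) : Polynomial L) ≠ 0 := fun i => pow_ne_zero _ hg0
  have hdegq : q.natDegree = p * g.natDegree := by
    have h1 : (q.map σ).natDegree = q.natDegree := Polynomial.natDegree_map σ
    rw [← h1, hqL, Polynomial.natDegree_pow]
  haveI instFinK : ∀ i, Module.Finite K (QK i) :=
    fun i => Module.Finite.of_basis (AdjoinRoot.powerBasis (hq_ne i)).basis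
  haveI instFreeK : ∀ i, Module.Free K (QK i) :=
    fun i => Module.Free.of_basis (AdjoinRoot.powerBasis (hq_ne i)).basis
  have hfrK : ∀ i, Module.finrank K (QK i) = e i * q.natDegree := by
    intro i
    have h := (AdjoinRoot.powerBasis (hq_ne i)).finrank
    rw [AdjoinRoot.powerBasis_dim] at h
    rw [show Module.finrank K (QK i) = Module.finrank K (AdjoinRoot (q ^ e i)) from rfl, h,
      Polynomial.natDegree_pow, mul_comm]
  let eKr : MK ≃ₗ[K] (⨁ i, QK i) := eK.restrictScalars K
  have hn_eq : (n : ℕ) = ∑ i, e i * q.natDegree := by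
    have h1 : Module.finrank K (Fin n → K) = Module.finrank K MK := LinearEquiv.finrank_eq ofK
    have h2 : Module.finrank K MK = Module.finrank K (⨁ i, QK i) := LinearEquiv.finrank_eq eKr
    have h3 : Module.finrank K (⨁ i, QK i) = ∑ i, e i * q.natDegree := by
      rw [Module.finrank_directSum]
      exact Finset.sum_congr rfl fun i _ => hfrK i
    rw [← h3, ← h2, ← h1, Module.finrank_fin_fun]
  haveI instFinL : ∀ i, Module.Finite L (Polynomial L ⧸ Ideal.span {g ^ (p * e i)}) :=
    fun i => Module.Finite.of_basis (AdjoinRoot.powerBasis (hgpe_ne i)).basis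
  haveI instFreeL : ∀ i, Module.Free L (Polynomial L ⧸ Ideal.span {g ^ (p * e i)}) :=
    fun i => Module.Free.of_basis (AdjoinRoot.powerBasis (hgpe_ne i)).basis
  haveI : Module.Finite L (⨁ i, Polynomial L ⧸ Ideal.span {g ^ (p * e i)}) :=
    Module.Finite.equiv (DirectSum.linearEquivFunOnFintype L I _).symm
  haveI : Module.Finite L NL := Module.Finite.equiv ofL
  have hfrNL : Module.finrank L NL = n := by
    rw [← LinearEquiv.finrank_eq ofL, Module.finrank_fin_fun]
  have hfrDL : Module.finrank L (⨁ i, Polynomial L ⧸ Ideal.span {g ^ (p * e i)}) = n := by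
    rw [Module.finrank_directSum]
    have h5 : ∀ i, Module.finrank L (Polynomial L ⧸ Ideal.span {g ^ (p * e i)})
        = (p * e i) * g.natDegree := by
      intro i
      have h := (AdjoinRoot.powerBasis (hgpe_ne i)).finrank
      rw [AdjoinRoot.powerBasis_dim] at h
      rw [show Module.finrank L (Polynomial L ⧸ Ideal.span {g ^ (p * e i)})
        = Module.finrank L (AdjoinRoot (g ^ (p * e i))) from rfl, h, Polynomial.natDegree_pow]
    rw [Finset.sum_congr rfl fun i _ => h5 i, hn_eq]
    refine Finset.sum_congr rfl fun i _ => ?_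
    rw [hdegq]
    ring
  have hfr_eq : Module.finrank L (⨁ i, Polynomial L ⧸ Ideal.span {g ^ (p * e i)})
      = Module.finrank L NL := by rw [hfrDL, hfrNL]
  have hinj : Function.Injective Φ := by
    have hs : Function.Surjective (Φ.restrictScalars L) := hsurj
    have key := LinearMap.injective_iff_surjective_of_finrank_eq_finrank (K := L) (V := ⨁ i, Polynomial L ⧸ Ideal.span {g ^ (p * e i)}) (V₂ := NL)
      (f := (Φ.restrictScalars L : (⨁ i, Polynomial L ⧸ Ideal.span {g ^ (p * e i)}) →ₗ[L] NL)) hfr_eq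
    exact key.mpr hs
  exact ⟨(LinearEquiv.ofBijective Φ ⟨hinj, hsurj⟩).symm⟩
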